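/- If α ≤ 1, then the density of the continuous gamma-Lomax distribution with parameters c, α, θ has a decreasing hazard rate: the hazard function h(x) = f(x)/(1−F(x)) is nonincreasing on (0,∞). -/

import Mathlib

open MeasureTheory Real Filter Set

/-- Lower incomplete gamma function γ(a,t) = ∫₀ᵗ u^(a-1) e^(-u) du. -/
noncomputable def lowerGamma (a t : ℝ) : ℝ :=
  ∫ u in (0:ℝ)..t, u ^ (a - 1) * Real.exp (-u)

/-- pmf of the discrete gamma-Lomax distribution DGLD(c,a,θ). -/
noncomputable def dgldPMF (c a θ : ℝ) (x : ℕ) : ℝ :=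
  (1 / Real.Gamma a) *
    (lowerGamma a (c⁻¹ * Real.log (1 + ((x : ℝ) + 1) / θ)) -
     lowerGamma a (c⁻¹ * Real.log (1 + (x : ℝ) / θ)))

/-- cdf of DGLD(c,a,θ) at x ∈ ℕ. -/
noncomputable def dgldCDF (c a θ : ℝ) (x : ℕ) : ℝ :=
  lowerGamma a (c⁻¹ * Real.log (1 + ((x : ℝ) + 1) / θ)) / Real.Gamma a

/-- density of the continuous gamma-Lomax distribution. -/
noncomputable def glPDF (c a θ : ℝ) (x : ℝ) : ℝ :=
  (1 / ((x + θ) * Real.Gamma a * c ^ a)) * (1 + x / θ) ^ (-(1 / c)) *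
    (Real.log (1 + x / θ)) ^ (a - 1)

/-- cdf of the continuous gamma-Lomax distribution. -/
noncomputable def glCDF (c a θ : ℝ) (x : ℝ) : ℝ :=
  lowerGamma a (c⁻¹ * Real.log (1 + x / θ)) / Real.Gamma a

noncomputable def U (a t : ℝ) : ℝ := ∫ u in Set.Ioi t, u ^ (a - 1) * Real.exp (-u)

lemma intU {a : ℝ} (ha : 0 < a) {t : ℝ} (ht : 0 ≤ t) :
    IntegrableOn (fun u : ℝ => u ^ (a - 1) * Real.exp (-u)) (Set.Ioi t) := by
  have h := (Real.GammaIntegral_convergent ha).mono_set (Set.Ioi_subset_Ioi ht)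
  exact h.congr_fun (fun u _ => mul_comm _ _) measurableSet_Ioi

lemma gammaInt {a : ℝ} (ha : 0 < a) :
    Real.Gamma a = ∫ u in Set.Ioi (0:ℝ), u ^ (a - 1) * Real.exp (-u) := by
  rw [Real.Gamma_eq_integral ha]
  exact setIntegral_congr_fun measurableSet_Ioi fun u _ => mul_comm _ _

lemma gamma_split {a : ℝ} (ha : 0 < a) {t : ℝ} (ht : 0 < t) :
    Real.Gamma a = lowerGamma a t + U a t := by
  have key : (∫ u in Set.Ioi (0:ℝ), u ^ (a - 1) * Real.exp (-u))
      = (∫ u in Set.Ioc (0:ℝ) t, u ^ (a - 1) * Real.exp (-u))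
        + ∫ u in Set.Ioi t, u ^ (a - 1) * Real.exp (-u) := by
    rw [← setIntegral_union (Set.Ioc_disjoint_Ioi le_rfl) measurableSet_Ioi
      ((intU ha le_rfl).mono_set Set.Ioc_subset_Ioi_self) (intU ha ht.le),
      Set.Ioc_union_Ioi_eq_Ioi ht.le]
  rw [gammaInt ha, key, lowerGamma, intervalIntegral.integral_of_le ht.le]
  rfl

lemma U_pos {a : ℝ} (ha : 0 < a) {t : ℝ} (ht : 0 ≤ t) : 0 < U a t := by
  rw [U, setIntegral_pos_iff_support_of_nonneg_ae]
  · have hsub : Set.Ioi t ⊆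
        Function.support (fun u : ℝ => u ^ (a - 1) * Real.exp (-u)) ∩ Set.Ioi t := by
      intro u hu
      have hu0 : 0 < u := lt_of_le_of_lt ht hu
      exact ⟨mul_ne_zero (Real.rpow_pos_of_pos hu0 _).ne' (Real.exp_pos _).ne', hu⟩
    calc (0 : ENNReal) < volume (Set.Ioi t) := by simp [Real.volume_Ioi]
      _ ≤ _ := measure_mono hsub
  · filter_upwards [self_mem_ae_restrict measurableSet_Ioi] with u hu
    have hu0 : 0 < u := lt_of_le_of_lt ht hu
    positivity
  · exact intU ha ht

lemma U_shift {a : ℝ} (t : ℝ) :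
    U a t = ∫ w in Set.Ioi (0:ℝ), (t + w) ^ (a - 1) * Real.exp (-(t + w)) := by
  have hmp := measurePreserving_add_right (volume : Measure ℝ) t
  have hemb := (MeasurableEquiv.addRight t).measurableEmbedding
  have h := hmp.setIntegral_preimage_emb hemb
    (fun u : ℝ => u ^ (a - 1) * Real.exp (-u)) (Set.Ioi t)
  have hpre : (fun x : ℝ => x + t) ⁻¹' Set.Ioi t = Set.Ioi 0 := by
    ext w; simp [Set.mem_preimage]
  rw [U, ← h, hpre]
  exact setIntegral_congr_fun measurableSet_Ioi fun w _ => by rw [add_comm]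

lemma intU_shift {a : ℝ} (ha : 0 < a) {t : ℝ} (ht : 0 ≤ t) :
    IntegrableOn (fun w : ℝ => (t + w) ^ (a - 1) * Real.exp (-(t + w))) (Set.Ioi 0) := by
  have hmp := measurePreserving_add_right (volume : Measure ℝ) t
  have hemb := (MeasurableEquiv.addRight t).measurableEmbedding
  have hpre : (fun x : ℝ => x + t) ⁻¹' Set.Ioi t = Set.Ioi 0 := by
    ext w; simp [Set.mem_preimage]
  have hres := hmp.restrict_preimage_emb hemb (Set.Ioi t)
  have h2 := (hres.integrable_comp_emb hemb).mpr (intU ha ht)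
  rw [hpre] at h2
  have : ((fun u : ℝ => u ^ (a - 1) * Real.exp (-u)) ∘ fun x : ℝ => x + t)
      = fun w : ℝ => (t + w) ^ (a - 1) * Real.exp (-(t + w)) := by
    funext w; simp [Function.comp, add_comm]
  rwa [this] at h2

lemma key_ineq {a : ℝ} (ha : 0 < a) (ha1 : a ≤ 1) {t t' : ℝ} (ht : 0 < t) (htt : t ≤ t') :
    Real.exp (-t') * t' ^ (a - 1) * U a t ≤ Real.exp (-t) * t ^ (a - 1) * U a t' := by
  have ht' : 0 < t' := lt_of_lt_of_le ht htt
  rw [U_shift t, U_shift t', ← MeasureTheory.integral_const_mul,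
    ← MeasureTheory.integral_const_mul]
  refine setIntegral_mono_on ((intU_shift ha ht.le).const_mul _)
    ((intU_shift ha ht'.le).const_mul _) measurableSet_Ioi ?_
  intro w hw
  have hw0 : 0 < w := hw
  have h1 : 0 < t + w := by linarith
  have h2 : 0 < t' + w := by linarith
  have hbase : t * (t' + w) ≤ t' * (t + w) := by nlinarith
  have hpow : (t' * (t + w)) ^ (a - 1) ≤ (t * (t' + w)) ^ (a - 1) :=
    Real.rpow_le_rpow_of_nonpos (by positivity) hbase (by linarith)
  have key2 : t' ^ (a - 1) * (t + w) ^ (a - 1) ≤ t ^ (a - 1) * (t' + w) ^ (a - 1) := by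
    rw [← Real.mul_rpow ht'.le h1.le, ← Real.mul_rpow ht.le h2.le]; exact hpow
  have eexp : Real.exp (-t') * Real.exp (-(t + w)) = Real.exp (-t) * Real.exp (-(t' + w)) := by
    rw [← Real.exp_add, ← Real.exp_add]; congr 1; ring
  calc Real.exp (-t') * t' ^ (a - 1) * ((t + w) ^ (a - 1) * Real.exp (-(t + w)))
      = t' ^ (a - 1) * (t + w) ^ (a - 1) * (Real.exp (-t') * Real.exp (-(t + w))) := by ring
    _ ≤ t ^ (a - 1) * (t' + w) ^ (a - 1) * (Real.exp (-t') * Real.exp (-(t + w))) :=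
        mul_le_mul_of_nonneg_right key2 (by positivity)
    _ = Real.exp (-t) * t ^ (a - 1) * ((t' + w) ^ (a - 1) * Real.exp (-(t' + w))) := by
        rw [eexp]; ring

lemma hazard_eq (c a θ : ℝ) (hc : 0 < c) (ha : 0 < a) (hθ : 0 < θ) {x : ℝ} (hx : 0 < x) :
    glPDF c a θ x / (1 - glCDF c a θ x)
      = Real.exp (-(c⁻¹ * Real.log (1 + x / θ))) * (c⁻¹ * Real.log (1 + x / θ)) ^ (a - 1)
        / ((x + θ) * c * U a (c⁻¹ * Real.log (1 + x / θ))) := by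
  have hix : (1:ℝ) < 1 + x / θ := by
    have : 0 < x / θ := div_pos hx hθ
    linarith
  have hL : 0 < Real.log (1 + x / θ) := Real.log_pos hix
  set L := Real.log (1 + x / θ) with hLdef
  have htpos : 0 < c⁻¹ * L := mul_pos (inv_pos.mpr hc) hL
  have hΓ : 0 < Real.Gamma a := Real.Gamma_pos_of_pos ha
  have hU : 0 < U a (c⁻¹ * L) := U_pos ha htpos.le
  have hsplit := gamma_split ha htpos
  have hcdf : 1 - glCDF c a θ x = U a (c⁻¹ * L) / Real.Gamma a := by
    rw [glCDF, eq_div_iff hΓ.ne', sub_mul, one_mul, div_mul_cancel₀ _ hΓ.ne']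
    linarith
  have hexp : (1 + x / θ) ^ (-(1 / c)) = Real.exp (-(c⁻¹ * L)) := by
    rw [Real.rpow_def_of_pos (by linarith)]
    congr 1
    rw [← hLdef]
    field_simp
  have hLct : L = c * (c⁻¹ * L) := by field_simp
  have hpdf : glPDF c a θ x
      = Real.exp (-(c⁻¹ * L)) * (c⁻¹ * L) ^ (a - 1) / ((x + θ) * c * Real.Gamma a) := by
    rw [glPDF, hexp, ← hLdef, hLct]
    rw [Real.mul_rpow hc.le htpos.le]
    have hca : c ^ (a - 1 : ℝ) = c ^ (a:ℝ) / c := by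
      rw [Real.rpow_sub hc, Real.rpow_one]
    rw [hca]
    have hcarp : (0:ℝ) < c ^ (a:ℝ) := Real.rpow_pos_of_pos hc a
    have hxθ : (0:ℝ) < x + θ := by linarith
    field_simp
  have hxθ : (0:ℝ) < x + θ := by linarith
  rw [hpdf, hcdf]
  rw [div_div_div_eq]
  rw [show (x + θ) * c * Real.Gamma a * U a (c⁻¹ * L)
      = (x + θ) * c * U a (c⁻¹ * L) * Real.Gamma a by ring]
  exact mul_div_mul_right _ _ hΓ.ne'

theorem gammaLomax_DFR (c a θ : ℝ) (hc : 0 < c) (ha : 0 < a) (hθ : 0 < θ)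
    (ha1 : a ≤ 1) :
    ∀ x y : ℝ, 0 < x → x ≤ y →
      glPDF c a θ y / (1 - glCDF c a θ y) ≤ glPDF c a θ x / (1 - glCDF c a θ x) := by
  intro x y hx hxy
  have hy : 0 < y := lt_of_lt_of_le hx hxy
  set t := c⁻¹ * Real.log (1 + x / θ) with htdef
  set t' := c⁻¹ * Real.log (1 + y / θ) with ht'def
  have hixx : (1:ℝ) < 1 + x / θ := by
    have : 0 < x / θ := div_pos hx hθ; linarith
  have hixy : (1:ℝ) < 1 + y / θ := by
    have : 0 < y / θ := div_pos hy hθ; linarith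
  have ht : 0 < t := mul_pos (inv_pos.mpr hc) (Real.log_pos hixx)
  have ht' : 0 < t' := mul_pos (inv_pos.mpr hc) (Real.log_pos hixy)
  have htt' : t ≤ t' := by
    apply mul_le_mul_of_nonneg_left _ (inv_nonneg.mpr hc.le)
    apply Real.log_le_log (by linarith)
    have : x / θ ≤ y / θ := div_le_div_of_nonneg_right hxy hθ.le
    linarith
  rw [hazard_eq c a θ hc ha hθ hx, hazard_eq c a θ hc ha hθ hy, ← htdef, ← ht'def]
  have hUt : 0 < U a t := U_pos ha ht.le
  have hUt' : 0 < U a t' := U_pos ha ht'.le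
  rw [div_le_div_iff₀ (by positivity) (by positivity)]
  have K := key_ineq ha ha1 ht htt'
  calc Real.exp (-t') * t' ^ (a - 1) * ((x + θ) * c * U a t)
      = Real.exp (-t') * t' ^ (a - 1) * U a t * ((x + θ) * c) := by ring
    _ ≤ Real.exp (-t) * t ^ (a - 1) * U a t' * ((x + θ) * c) :=
        mul_le_mul_of_nonneg_right K (by positivity)
    _ ≤ Real.exp (-t) * t ^ (a - 1) * U a t' * ((y + θ) * c) := by
        apply mul_le_mul_of_nonneg_left _ (by positivity)
        have : x + θ ≤ y + θ := by linarith
        exact mul_le_mul_of_nonneg_right this hc.le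
    _ = Real.exp (-t) * t ^ (a - 1) * ((y + θ) * c * U a t') := by ring
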